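/- Let A ⊆ ℕ be a classical normal set. For a ∈ ℕ define S_a = {b ∈ ℕ : a + b ∈ A and a·b ∈ A}. Then for every a ∈ ℕ, at least one of the sets S_a and S_{a²} has positive upper density; in particular, A contains pairs {a+b, a·b} with arbitrarily large a and b. -/

import Mathlib

open Filter

/- `A ⊆ ℕ` is a classical normal set. -/
open scoped Classical in
def ClassicalNormalSet (A : Set ℕ) : Prop :=
  ∀ K : Finset ℕ, K.Nonempty → (∀ k ∈ K, 0 < k) → ∀ B : ℕ → Bool,
    Tendsto
      (fun n =>
        (((Finset.Icc 1 n).filter (fun m => ∀ k ∈ K, (k + m ∈ A ↔ B k = true))).card : ℝ) / n)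
      atTop (nhds ((1 / 2 : ℝ) ^ K.card))

/- The upper density of `V ⊆ ℕ`: `limsup_N |V ∩ {1,…,N}|/N`. -/
open scoped Classical in
noncomputable def upperDensity (V : Set ℕ) : ℝ :=
  limsup (fun N => (((Finset.Icc 1 N).filter (· ∈ V)).card : ℝ) / N) atTop

namespace PSP

open Finset
open scoped Classical

noncomputable def cnt (p : ℕ → Prop) (N : ℕ) : ℝ := (((Finset.Icc 1 N).filter p).card : ℝ)

lemma cnt_eq {p : ℕ → Prop} [DecidablePred p] (N : ℕ) :
    cnt p N = (((Finset.Icc 1 N).filter p).card : ℝ) := by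
  unfold cnt
  rw [Finset.filter_congr_decidable]

def Den (p : ℕ → Prop) (d : ℝ) : Prop :=
  Tendsto (fun N : ℕ => cnt p N / N) atTop (nhds d)

lemma cnt_nonneg (p : ℕ → Prop) (N : ℕ) : 0 ≤ cnt p N := Nat.cast_nonneg _

lemma cnt_le (p : ℕ → Prop) (N : ℕ) : cnt p N ≤ N := by
  unfold cnt
  have h : ((Icc 1 N).filter p).card ≤ N := by
    calc ((Icc 1 N).filter p).card ≤ (Icc 1 N).card := Finset.card_filter_le _ _
    _ = N := by rw [Nat.card_Icc]; omega
  exact_mod_cast h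

lemma cnt_congr {p q : ℕ → Prop} (h : ∀ n, p n ↔ q n) : cnt p = cnt q := by
  funext N
  unfold cnt
  have e : (Icc 1 N).filter p = (Icc 1 N).filter q := by
    apply Finset.filter_congr
    intro x _
    simp only [h x]
  rw [e]

lemma den_congr {p q : ℕ → Prop} {d : ℝ} (h : ∀ n, p n ↔ q n) (hp : Den p d) : Den q d := by
  unfold Den at hp ⊢
  rwa [← cnt_congr h]

lemma cnt_mono {p q : ℕ → Prop} (h : ∀ n, p n → q n) (N : ℕ) : cnt p N ≤ cnt q N := by
  unfold cnt
  have h1 : ((Icc 1 N).filter p).card ≤ ((Icc 1 N).filter q).card :=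
    Finset.card_le_card (Finset.monotone_filter_right _ (by intro x _ hx; exact h x hx))
  exact_mod_cast h1

lemma div_le_div_nat {x y : ℝ} (N : ℕ) (h : x ≤ y) (hx : 0 ≤ x) : x / N ≤ y / N := by
  rcases Nat.eq_zero_or_pos N with rfl | hN
  · simp
  · have hN' : (0:ℝ) < N := by exact_mod_cast hN
    gcongr

lemma nul_mono {p q : ℕ → Prop} (h : ∀ n, p n → q n) (hq : Den q 0) : Den p 0 := by
  apply squeeze_zero (fun N => div_nonneg (cnt_nonneg p N) (Nat.cast_nonneg N))
    (fun N => div_le_div_nat N (cnt_mono h N) (cnt_nonneg p N)) hq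

lemma nul_or {p q : ℕ → Prop} (hp : Den p 0) (hq : Den q 0) :
    Den (fun n => p n ∨ q n) 0 := by
  have key : ∀ N, cnt (fun n => p n ∨ q n) N ≤ cnt p N + cnt q N := by
    intro N
    rw [cnt_eq, cnt_eq, cnt_eq]
    have hsub : (Icc 1 N).filter (fun n => p n ∨ q n) ⊆
        (Icc 1 N).filter p ∪ (Icc 1 N).filter q := by
      intro x hx
      simp only [Finset.mem_filter, Finset.mem_union] at hx ⊢
      tauto
    have h1 : ((Icc 1 N).filter (fun n => p n ∨ q n)).card ≤
        ((Icc 1 N).filter p).card + ((Icc 1 N).filter q).card :=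
      le_trans (Finset.card_le_card hsub) (Finset.card_union_le _ _)
    exact_mod_cast h1
  have h0 : Tendsto (fun N : ℕ => cnt p N / N + cnt q N / N) atTop (nhds 0) := by
    simpa using hp.add hq
  apply squeeze_zero (fun N => div_nonneg (cnt_nonneg _ N) (Nat.cast_nonneg N)) ?_ h0
  intro N
  rw [← add_div]
  exact div_le_div_nat N (key N) (cnt_nonneg _ N)

lemma nul_shift {p : ℕ → Prop} (hp : Den p 0) : Den (fun n => p (n + 1)) 0 := by
  have key : ∀ N, cnt (fun n => p (n + 1)) N ≤ cnt p (N + 1) := by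
    intro N
    unfold cnt
    have h1 : ((Icc 1 N).filter (fun n => p (n + 1))).card ≤ ((Icc 1 (N+1)).filter p).card := by
      apply Finset.card_le_card_of_injOn (fun n => n + 1)
      · intro n hn
        simp only [Finset.mem_coe, Finset.mem_filter, Finset.mem_Icc] at hn ⊢
        exact ⟨⟨by omega, by omega⟩, hn.2⟩
      · intro x _ y _ hxy
        simpa using hxy
    exact_mod_cast h1
  have hcomp : Tendsto (fun N : ℕ => 2 * (cnt p (N+1) / ((N+1:ℕ):ℝ))) atTop (nhds 0) := by
    have h2 := (hp.comp (tendsto_add_atTop_nat 1)).const_mul (2:ℝ)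
    simpa [Function.comp] using h2
  apply squeeze_zero'
    (Eventually.of_forall fun N => div_nonneg (cnt_nonneg _ N) (Nat.cast_nonneg N)) ?_ hcomp
  filter_upwards [eventually_ge_atTop 1] with N hN
  have h1 : (0:ℝ) < N := by exact_mod_cast hN
  have hpos : (0:ℝ) < ((N+1:ℕ):ℝ) := by positivity
  rw [div_le_iff₀ h1]
  have h3 : (1:ℝ) ≤ 2 * N / ((N+1:ℕ):ℝ) := by
    rw [le_div_iff₀ hpos]
    have h4 : (1:ℝ) ≤ N := by exact_mod_cast hN
    push_cast
    linarith
  calc cnt (fun n => p (n+1)) N ≤ cnt p (N + 1) := key N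
  _ = cnt p (N+1) * 1 := (mul_one _).symm
  _ ≤ cnt p (N+1) * (2 * N / ((N+1:ℕ):ℝ)) :=
      mul_le_mul_of_nonneg_left h3 (cnt_nonneg _ _)
  _ = 2 * (cnt p (N + 1) / ((N+1:ℕ):ℝ)) * N := by ring

lemma nul_mul {p : ℕ → Prop} (a : ℕ) (ha : 0 < a) (hp : Den p 0) :
    Den (fun n => p (a * n)) 0 := by
  have key : ∀ N, cnt (fun n => p (a * n)) N ≤ cnt p (a * N) := by
    intro N
    unfold cnt
    have h1 : ((Icc 1 N).filter (fun n => p (a * n))).card ≤ ((Icc 1 (a*N)).filter p).card := by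
      apply Finset.card_le_card_of_injOn (fun n => a * n)
      · intro n hn
        simp only [Finset.mem_coe, Finset.mem_filter, Finset.mem_Icc] at hn ⊢
        refine ⟨⟨?_, Nat.mul_le_mul_left a hn.1.2⟩, hn.2⟩
        have := Nat.mul_pos ha (show 0 < n by omega)
        omega
      · intro x _ y _ hxy
        exact Nat.eq_of_mul_eq_mul_left ha (by simpa using hxy)
    exact_mod_cast h1
  have hmul : Tendsto (fun N : ℕ => a * N) atTop atTop :=
    tendsto_atTop_mono (fun N => Nat.le_mul_of_pos_left N ha) tendsto_id
  have hcomp : Tendsto (fun N : ℕ => (a:ℝ) * (cnt p (a*N) / ((a*N : ℕ):ℝ))) atTop (nhds 0) := by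
    have h2 := (hp.comp hmul).const_mul (a:ℝ)
    simpa [Function.comp] using h2
  apply squeeze_zero'
    (Eventually.of_forall fun N => div_nonneg (cnt_nonneg _ N) (Nat.cast_nonneg N)) ?_ hcomp
  filter_upwards [eventually_ge_atTop 1] with N hN
  have h1 : (0:ℝ) < N := by exact_mod_cast hN
  have h2 : (0:ℝ) < ((a*N:ℕ):ℝ) := by
    have : 0 < a * N := Nat.mul_pos ha (by omega)
    exact_mod_cast this
  rw [div_le_iff₀ h1]
  calc cnt (fun n => p (a*n)) N ≤ cnt p (a * N) := key N
  _ = (a:ℝ) * (cnt p (a*N) / ((a*N:ℕ):ℝ)) * N := by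
      have h3 : ((a*N:ℕ):ℝ) ≠ 0 := h2.ne'
      field_simp
      push_cast
      ring


/-- if `p`, `q` both have density 1/2 and `p ∧ q` is null, then `¬p ∧ ¬q` is null. -/
lemma aec {p q : ℕ → Prop} (hp : Den p (1/2)) (hq : Den q (1/2))
    (hpq : Den (fun n => p n ∧ q n) 0) : Den (fun n => ¬ p n ∧ ¬ q n) 0 := by
  have key : ∀ N : ℕ, cnt (fun n => ¬ p n ∧ ¬ q n) N + cnt p N + cnt q N
      = N + cnt (fun n => p n ∧ q n) N := by
    intro N
    have e1 : (Icc 1 N).filter (fun n => ¬ p n ∧ ¬ q n)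
        = (Icc 1 N).filter (fun n => ¬ (p n ∨ q n)) := by
      apply Finset.filter_congr
      intro x _
      constructor
      · rintro ⟨h1, h2⟩ (h|h) <;> tauto
      · intro h; exact ⟨fun h1 => h (Or.inl h1), fun h2 => h (Or.inr h2)⟩
    have e2 : ((Icc 1 N).filter (fun n => p n ∨ q n)).card
        + ((Icc 1 N).filter (fun n => ¬ (p n ∨ q n))).card = (Icc 1 N).card :=
      Finset.card_filter_add_card_filter_not _
    have e3 : ((Icc 1 N).filter (fun n => p n ∨ q n)).card
        + ((Icc 1 N).filter (fun n => p n ∧ q n)).card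
        = ((Icc 1 N).filter p).card + ((Icc 1 N).filter q).card := by
      have h1 : (Icc 1 N).filter (fun n => p n ∨ q n) = (Icc 1 N).filter p ∪ (Icc 1 N).filter q := by
        ext x
        simp only [Finset.mem_filter, Finset.mem_union]
        tauto
      have h2 : (Icc 1 N).filter (fun n => p n ∧ q n) = (Icc 1 N).filter p ∩ (Icc 1 N).filter q := by
        ext x
        simp only [Finset.mem_filter, Finset.mem_inter]
        tauto
      rw [h1, h2]
      exact Finset.card_union_add_card_inter _ _
    have e4 : (Icc 1 N).card = N := by rw [Nat.card_Icc]; omega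
    simp only [cnt_eq]
    rw [e1]
    rw [e4] at e2
    have e5 : ((Icc 1 N).filter (fun n => ¬ (p n ∨ q n))).card + ((Icc 1 N).filter p).card
        + ((Icc 1 N).filter q).card
        = N + ((Icc 1 N).filter (fun n => p n ∧ q n)).card := by omega
    exact_mod_cast e5
  have hone : Tendsto (fun N : ℕ => (N:ℝ)/N) atTop (nhds 1) := by
    apply Tendsto.congr' ?_ tendsto_const_nhds
    filter_upwards [eventually_ge_atTop 1] with N hN
    have h1 : (N:ℝ) ≠ 0 := by
      exact_mod_cast Nat.one_le_iff_ne_zero.mp hN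
    exact (div_self h1).symm
  have hbig : Tendsto
      (fun N : ℕ => (N:ℝ)/N + cnt (fun n => p n ∧ q n) N / N - cnt p N / N - cnt q N / N)
      atTop (nhds 0) := by
    have h := ((hone.add hpq).sub hp).sub hq
    norm_num at h
    exact h
  apply Tendsto.congr ?_ hbig
  intro N
  have hk := key N
  have : cnt (fun n => ¬ p n ∧ ¬ q n) N = (N:ℝ) + cnt (fun n => p n ∧ q n) N - cnt p N - cnt q N := by
    linarith
  rw [this]
  ring

variable {A : Set ℕ}

lemma den_single (hA : ClassicalNormalSet A) {k : ℕ} (hk : 0 < k) :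
    Den (fun m => k + m ∈ A) (1/2) := by
  have h := hA {k} ⟨k, Finset.mem_singleton_self k⟩ (by simpa using hk) (fun _ => true)
  simp only [Finset.card_singleton, pow_one] at h
  have e : Den (fun m => ∀ k' ∈ ({k} : Finset ℕ), (k' + m ∈ A ↔ (fun _ => true) k' = true)) (1/2) := by
    unfold Den
    simp only [cnt_eq]
    exact h
  apply den_congr ?_ e
  intro n
  simp

lemma den_pair (hA : ClassicalNormalSet A) {k₁ k₂ : ℕ} (h1 : 0 < k₁) (h2 : 0 < k₂)
    (hne : k₁ ≠ k₂) (b₁ b₂ : Bool) :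
    Den (fun m => ((k₁ + m ∈ A) ↔ (b₁ = true)) ∧ ((k₂ + m ∈ A) ↔ (b₂ = true))) (1/4) := by
  set B : ℕ → Bool := fun k => if k = k₁ then b₁ else b₂ with hB
  have hcard : ({k₁, k₂} : Finset ℕ).card = 2 := by
    rw [Finset.card_insert_of_notMem (by simpa using hne), Finset.card_singleton]
  have h := hA {k₁, k₂} ⟨k₁, by simp⟩ (by intro k hk; simp at hk; rcases hk with rfl|rfl <;> assumption) B
  rw [hcard] at h
  have hval : ((1:ℝ)/2)^2 = 1/4 := by norm_num
  rw [hval] at h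
  have e : Den (fun m => ∀ k ∈ ({k₁, k₂} : Finset ℕ), (k + m ∈ A ↔ B k = true)) (1/4) := by
    unfold Den
    simp only [cnt_eq]
    exact h
  have hBk1 : B k₁ = b₁ := if_pos rfl
  have hBk2 : B k₂ = b₂ := if_neg (Ne.symm hne)
  apply den_congr ?_ e
  intro n
  simp only [Finset.mem_insert, Finset.mem_singleton, forall_eq_or_imp, forall_eq, hBk1, hBk2]

/-- the centered indicator -/
noncomputable def g (A : Set ℕ) (j : ℕ) : ℝ := (if j ∈ A then 1 else 0) - 1/2

lemma g_abs (A : Set ℕ) (j : ℕ) : |g A j| ≤ 1/2 := by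
  unfold g
  split <;> rw [abs_le] <;> norm_num

lemma g_sq (A : Set ℕ) (j : ℕ) : (g A j)^2 = 1/4 := by
  unfold g
  split <;> norm_num

lemma sum_Icc_to_range (F : ℕ → ℝ) (M : ℕ) :
    ∑ m ∈ Icc 1 M, F m = ∑ i ∈ range M, F (i+1) := by
  rw [← Finset.Ico_add_one_right_eq_Icc, Finset.sum_Ico_eq_sum_range]
  simp [add_comm]

lemma cnt_eq_sum (p : ℕ → Prop) (N : ℕ) :
    cnt p N = ∑ i ∈ range N, (if p (i+1) then (1:ℝ) else 0) := by
  rw [← sum_Icc_to_range (fun m => if p m then (1:ℝ) else 0) N]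
  unfold cnt
  rw [Finset.sum_boole]

/-- correlations vanish -/
lemma corr_pair (hA : ClassicalNormalSet A) {k₁ k₂ : ℕ} (h1 : 0 < k₁) (h2 : 0 < k₂)
    (hne : k₁ ≠ k₂) :
    Tendsto (fun M : ℕ => (∑ i ∈ range M, g A (k₁ + (i+1)) * g A (k₂ + (i+1))) / M)
      atTop (nhds 0) := by
  have key : ∀ M : ℕ, ∑ i ∈ range M, g A (k₁ + (i+1)) * g A (k₂ + (i+1))
      = (1/4) * (cnt (fun m => ((k₁ + m ∈ A) ↔ (true = true)) ∧ ((k₂ + m ∈ A) ↔ (true = true))) M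
        + cnt (fun m => ((k₁ + m ∈ A) ↔ (false = true)) ∧ ((k₂ + m ∈ A) ↔ (false = true))) M
        - cnt (fun m => ((k₁ + m ∈ A) ↔ (true = true)) ∧ ((k₂ + m ∈ A) ↔ (false = true))) M
        - cnt (fun m => ((k₁ + m ∈ A) ↔ (false = true)) ∧ ((k₂ + m ∈ A) ↔ (true = true))) M) := by
    intro M
    simp only [cnt_eq_sum]
    rw [← Finset.sum_add_distrib, ← Finset.sum_sub_distrib, ← Finset.sum_sub_distrib,
      Finset.mul_sum]
    apply Finset.sum_congr rfl
    intro i _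
    by_cases hx : k₁ + (i+1) ∈ A <;> by_cases hy : k₂ + (i+1) ∈ A <;>
      simp [g, hx, hy] <;> norm_num
  have h4 := den_pair hA h1 h2 hne
  have hbig : Tendsto (fun M : ℕ =>
      (1/4) * (cnt (fun m => ((k₁ + m ∈ A) ↔ (true = true)) ∧ ((k₂ + m ∈ A) ↔ (true = true))) M / M
        + cnt (fun m => ((k₁ + m ∈ A) ↔ (false = true)) ∧ ((k₂ + m ∈ A) ↔ (false = true))) M / M
        - cnt (fun m => ((k₁ + m ∈ A) ↔ (true = true)) ∧ ((k₂ + m ∈ A) ↔ (false = true))) M / M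
        - cnt (fun m => ((k₁ + m ∈ A) ↔ (false = true)) ∧ ((k₂ + m ∈ A) ↔ (true = true))) M / M))
      atTop (nhds 0) := by
    have h := (((h4 true true).add (h4 false false)).sub (h4 true false)).sub (h4 false true)
    have := h.const_mul (1/4 : ℝ)
    norm_num at this
    convert this using 2
    norm_num
  apply Tendsto.congr ?_ hbig
  intro M
  rw [key M]
  ring


lemma near_tendsto {f f' : ℕ → ℝ} {C L : ℝ} (hC : ∀ N, |f' N - f N| ≤ C)
    (h : Tendsto (fun N : ℕ => f N / N) atTop (nhds L)) :
    Tendsto (fun N : ℕ => f' N / N) atTop (nhds L) := by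
  have hz : Tendsto (fun N : ℕ => (f' N - f N)/N) atTop (nhds 0) := by
    apply squeeze_zero_norm (fun N => ?_) (tendsto_const_div_atTop_nhds_zero_nat C)
    rw [Real.norm_eq_abs, abs_div, abs_of_nonneg (Nat.cast_nonneg N : (0:ℝ) ≤ N)]
    rcases Nat.eq_zero_or_pos N with rfl | hN
    · simp
    · have hN' : (0:ℝ) < N := by exact_mod_cast hN
      gcongr
      exact hC N
  have hsum := h.add hz
  rw [add_zero] at hsum
  apply Tendsto.congr ?_ hsum
  intro N
  rw [← add_div]
  ring_nf

lemma second_moment (A : Set ℕ)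
    (hcorr : ∀ k₁ k₂ : ℕ, 0 < k₁ → 0 < k₂ → k₁ ≠ k₂ →
      Tendsto (fun M : ℕ => (∑ i ∈ range M, g A (k₁ + (i+1)) * g A (k₂ + (i+1))) / M)
        atTop (nhds 0))
    (q H : ℕ) (hq : 0 < q) :
    Tendsto (fun M : ℕ => (∑ m ∈ range M, (∑ j ∈ range H, g A (q*j+1 + m))^2)/M)
      atTop (nhds ((H:ℝ)/4)) := by
  have expand : ∀ M : ℕ, ∑ m ∈ range M, (∑ j ∈ range H, g A (q*j+1 + m))^2
      = ∑ j ∈ range H, ∑ j' ∈ range H, ∑ m ∈ range M, g A (q*j+1 + m) * g A (q*j'+1 + m) := by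
    intro M
    have e : ∀ m : ℕ, (∑ j ∈ range H, g A (q*j+1+m))^2
        = ∑ j ∈ range H, ∑ j' ∈ range H, g A (q*j+1+m) * g A (q*j'+1+m) := by
      intro m
      rw [sq, Finset.sum_mul_sum]
    simp_rw [e]
    rw [Finset.sum_comm]
    apply Finset.sum_congr rfl
    intro j _
    rw [Finset.sum_comm]
  have main : Tendsto (fun M : ℕ => ∑ j ∈ range H, ∑ j' ∈ range H,
      ((∑ m ∈ range M, g A (q*j+1+m) * g A (q*j'+1+m))/M)) atTop
      (nhds (∑ j ∈ range H, ∑ j' ∈ range H, (if j = j' then (1/4:ℝ) else 0))) := by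
    apply tendsto_finset_sum
    intro j _
    apply tendsto_finset_sum
    intro j' _
    by_cases hjj : j = j'
    · subst hjj
      rw [if_pos rfl]
      have hs : ∀ M : ℕ, (∑ m ∈ range M, g A (q*j+1+m) * g A (q*j+1+m)) = (M:ℝ) * (1/4) := by
        intro M
        calc ∑ m ∈ range M, g A (q*j+1+m) * g A (q*j+1+m)
            = ∑ _m ∈ range M, (1/4:ℝ) := by
              apply Finset.sum_congr rfl
              intro m _
              rw [← sq, g_sq]
        _ = (M:ℝ) * (1/4) := by
              rw [Finset.sum_const, Finset.card_range, nsmul_eq_mul]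
      apply Tendsto.congr' ?_ tendsto_const_nhds
      filter_upwards [eventually_ge_atTop 1] with M hM
      have hM' : (M:ℝ) ≠ 0 := by
        have : (0:ℝ) < M := by exact_mod_cast hM
        exact this.ne'
      rw [hs M, mul_comm, mul_div_assoc, div_self hM', mul_one]
    · rw [if_neg hjj]
      have hne : q*j+1 ≠ q*j'+1 := by
        intro h
        exact hjj (Nat.eq_of_mul_eq_mul_left hq (by omega))
      have hcp := hcorr _ _ (Nat.succ_pos _) (Nat.succ_pos _) hne
      apply near_tendsto (C := (1/2 : ℝ)) ?_ hcp
      intro M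
      have e1 : ∑ i ∈ range M, g A (q*j+1 + (i+1)) * g A (q*j'+1 + (i+1))
          = (∑ m ∈ range M, g A (q*j+1+m) * g A (q*j'+1+m))
            + g A (q*j+1+M) * g A (q*j'+1+M) - g A (q*j+1+0) * g A (q*j'+1+0) := by
        have h1 := Finset.sum_range_succ' (fun m => g A (q*j+1+m) * g A (q*j'+1+m)) M
        have h2 := Finset.sum_range_succ (fun m => g A (q*j+1+m) * g A (q*j'+1+m)) M
        rw [h2] at h1
        linarith
      have babs : ∀ x y : ℕ, |g A x * g A y| ≤ 1/4 := by
        intro x y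
        rw [abs_mul]
        calc |g A x| * |g A y| ≤ (1/2) * (1/2) :=
          mul_le_mul (g_abs A x) (g_abs A y) (abs_nonneg _) (by norm_num)
        _ = 1/4 := by norm_num
      rw [e1]
      have b1 := babs (q*j+1+M) (q*j'+1+M)
      have b2 := babs (q*j+1+0) (q*j'+1+0)
      rw [abs_sub_comm]
      calc |(∑ m ∈ range M, g A (q*j+1+m) * g A (q*j'+1+m))
            + g A (q*j+1+M) * g A (q*j'+1+M) - g A (q*j+1+0) * g A (q*j'+1+0)
            - (∑ m ∈ range M, g A (q*j+1+m) * g A (q*j'+1+m))|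
          = |g A (q*j+1+M) * g A (q*j'+1+M) - g A (q*j+1+0) * g A (q*j'+1+0)| := by
            congr 1
            ring
      _ ≤ |g A (q*j+1+M) * g A (q*j'+1+M)| + |g A (q*j+1+0) * g A (q*j'+1+0)| := abs_sub _ _
      _ ≤ 1/2 := by linarith
  have hval : (∑ j ∈ range H, ∑ j' ∈ range H, (if j = j' then (1/4:ℝ) else 0)) = (H:ℝ)/4 := by
    have e : ∀ j ∈ range H, (∑ j' ∈ range H, if j = j' then (1/4:ℝ) else 0) = 1/4 := by
      intro j hj
      rw [Finset.sum_ite_eq]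
      simp [hj]
    rw [Finset.sum_congr rfl e, Finset.sum_const, Finset.card_range, nsmul_eq_mul]
    ring
  rw [← hval]
  apply Tendsto.congr ?_ main
  intro M
  rw [expand M, Finset.sum_div]
  apply Finset.sum_congr rfl
  intro j _
  rw [Finset.sum_div]


set_option maxHeartbeats 1000000 in
lemma apg (A : Set ℕ)
    (hSM : ∀ q H : ℕ, 0 < q → Tendsto
      (fun M : ℕ => (∑ m ∈ range M, (∑ j ∈ range H, g A (q*j+1 + m))^2)/M)
      atTop (nhds ((H:ℝ)/4)))
    (q c : ℕ) (hq : 0 < q) :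
    Tendsto (fun N : ℕ => (∑ i ∈ range N, g A (q*i + (c+1)))/N) atTop (nhds 0) := by
  rw [Metric.tendsto_atTop]
  intro ε hε
  obtain ⟨H, hH1, hHR⟩ : ∃ H : ℕ, 1 ≤ H ∧ (16*(q:ℝ))/ε^2 ≤ H :=
    ⟨⌈(16*(q:ℝ))/ε^2⌉₊ + 1, Nat.le_add_left 1 _, by
      push_cast
      linarith [Nat.le_ceil ((16*(q:ℝ))/ε^2)]⟩
  have hH1R : (1:ℝ) ≤ H := by exact_mod_cast hH1
  have hHpos : (0:ℝ) < H := by linarith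
  set G : ℕ → ℝ := fun x => ∑ j ∈ range H, g A (q*j+1 + x) with hGdef
  set F : ℕ → ℝ := fun t => g A (q*t + (c+1)) with hFdef
  set T : ℕ → ℝ := fun N => ∑ i ∈ range N, F i with hTdef
  set U : ℕ → ℝ := fun N => ∑ n ∈ range N, G (q*n + c) with hUdef
  have hFabs : ∀ t, |F t| ≤ 1/2 := fun t => g_abs A _
  -- B1
  have B1 : ∀ N : ℕ, |U N - (H:ℝ) * T N| ≤ (H:ℝ) * H := by
    intro N
    have e1 : U N = ∑ j ∈ range H, ∑ n ∈ range N, F (j + n) := by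
      rw [hUdef]
      simp only
      rw [Finset.sum_comm]
      apply Finset.sum_congr rfl
      intro j _
      apply Finset.sum_congr rfl
      intro n _
      rw [hFdef]
      simp only
      congr 1
      ring
    have e2 : (H:ℝ) * T N = ∑ _j ∈ range H, T N := by
      rw [Finset.sum_const, Finset.card_range, nsmul_eq_mul]
    rw [e1, e2, ← Finset.sum_sub_distrib]
    refine le_trans (Finset.abs_sum_le_sum_abs _ _) ?_
    have perj : ∀ j ∈ range H, |(∑ n ∈ range N, F (j + n)) - T N| ≤ (H:ℝ) := by
      intro j hj
      have h1 := Finset.sum_range_add F j N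
      have h2 := Finset.sum_range_add F N j
      rw [Nat.add_comm j N, h2] at h1
      -- h1 : T N + ∑ x < j, F (N+x) = ∑ x < j, F x + ∑ x < N, F (j + x)
      have e3 : (∑ n ∈ range N, F (j + n)) - T N
          = (∑ x ∈ range j, F (N + x)) - ∑ x ∈ range j, F x := by
        rw [hTdef]
        simp only
        linarith [h1]
      rw [e3]
      have habs : ∀ (s : ℕ → ℕ), |∑ x ∈ range j, F (s x)| ≤ (j:ℝ) * (1/2) := by
        intro s
        refine le_trans (Finset.abs_sum_le_sum_abs _ _) ?_
        calc ∑ x ∈ range j, |F (s x)| ≤ ∑ _x ∈ range j, (1/2:ℝ) :=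
          Finset.sum_le_sum (fun x _ => hFabs (s x))
        _ = (j:ℝ) * (1/2) := by rw [Finset.sum_const, Finset.card_range, nsmul_eq_mul]
      have hjH : (j:ℝ) ≤ H := by
        have : j < H := Finset.mem_range.mp hj
        exact_mod_cast this.le
      calc |(∑ x ∈ range j, F (N + x)) - ∑ x ∈ range j, F x|
          ≤ |∑ x ∈ range j, F (N + x)| + |∑ x ∈ range j, F x| := abs_sub _ _
      _ ≤ (j:ℝ) * (1/2) + (j:ℝ) * (1/2) := by
          have := habs (fun x => N + x)
          have := habs (fun x => x)
          gcongr <;> simpa using habs _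
      _ = (j:ℝ) := by ring
      _ ≤ (H:ℝ) := hjH
    calc ∑ j ∈ range H, |(∑ n ∈ range N, F (j + n)) - T N| ≤ ∑ _j ∈ range H, (H:ℝ) :=
      Finset.sum_le_sum perj
    _ = (H:ℝ) * H := by rw [Finset.sum_const, Finset.card_range, nsmul_eq_mul]
  -- B2
  have B2 : ∀ N : ℕ, (U N)^2 ≤ (N:ℝ) * ∑ m ∈ range (q*N + c + 1), (G m)^2 := by
    intro N
    have cs := Finset.sum_mul_sq_le_sq_mul_sq (range N) (fun _ => (1:ℝ)) (fun n => G (q*n + c))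
    simp only [one_mul, one_pow, Finset.sum_const, Finset.card_range, nsmul_eq_mul, mul_one] at cs
    have mono : ∑ n ∈ range N, (G (q*n + c))^2 ≤ ∑ m ∈ range (q*N + c + 1), (G m)^2 := by
      have hinj : ∀ x ∈ range N, ∀ y ∈ range N, q*x + c = q*y + c → x = y := by
        intro x _ y _ h
        exact Nat.eq_of_mul_eq_mul_left hq (by omega)
      have him : ∑ m ∈ (range N).image (fun n => q*n + c), (fun m => (G m)^2) m
          = ∑ n ∈ range N, (fun m => (G m)^2) ((fun n => q*n + c) n) :=
        Finset.sum_image hinj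
      simp only at him
      rw [← him]
      apply Finset.sum_le_sum_of_subset_of_nonneg
      · intro m hm
        rw [Finset.mem_image] at hm
        obtain ⟨n, hn, rfl⟩ := hm
        rw [Finset.mem_range] at hn ⊢
        have := Nat.mul_le_mul_left q (Nat.le_of_lt hn)
        omega
      · intro m _ _
        positivity
    calc (U N)^2 ≤ (N:ℝ) * ∑ n ∈ range N, (G (q*n + c))^2 := cs
    _ ≤ (N:ℝ) * ∑ m ∈ range (q*N + c + 1), (G m)^2 := by
        apply mul_le_mul_of_nonneg_left mono (Nat.cast_nonneg N)
  -- eventual second moment bound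
  have hev : ∀ᶠ M : ℕ in atTop, (∑ m ∈ range M, (G m)^2)/M ≤ (H:ℝ)/2 := by
    have hlt : (H:ℝ)/4 < (H:ℝ)/2 := by linarith
    exact (hSM q H hq).eventually_le_const hlt
  obtain ⟨M₀, hM₀⟩ := eventually_atTop.mp hev
  -- choose N₀
  have hεpos4 : (0:ℝ) < ε/4 := by linarith
  obtain ⟨K, hKceil⟩ : ∃ K : ℕ, (4*(H:ℝ))/ε ≤ K :=
    ⟨⌈(4*(H:ℝ))/ε⌉₊, Nat.le_ceil _⟩
  refine ⟨max (max M₀ (c+1)) (max 1 K), ?_⟩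
  intro N hN
  have hNM₀ : M₀ ≤ N := le_trans (le_trans (le_max_left _ _) (le_max_left _ _)) hN
  have hNc : c + 1 ≤ N := le_trans (le_trans (le_max_right _ _) (le_max_left _ _)) hN
  have hN1 : 1 ≤ N := le_trans (le_trans (le_max_left _ _) (le_max_right _ _)) hN
  have hNK : K ≤ N := le_trans (le_trans (le_max_right _ _) (le_max_right _ _)) hN
  have hNR : (0:ℝ) < N := by exact_mod_cast hN1
  have hqR : (1:ℝ) ≤ q := by exact_mod_cast hq
  -- N ≥ 4H/ε
  have hNKR : (4*(H:ℝ))/ε ≤ N := by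
    have hKR : (K:ℝ) ≤ (N:ℝ) := by exact_mod_cast hNK
    linarith
  have hHN : (H:ℝ)/N ≤ ε/4 := by
    rw [div_le_iff₀ hNR]
    rw [div_le_iff₀ hε] at hNKR
    linarith
  -- V bound
  have hM : M₀ ≤ q*N + c + 1 := by
    have : N ≤ q * N := Nat.le_mul_of_pos_left N hq
    omega
  have hVdiv := hM₀ (q*N + c + 1) hM
  have hMpos : (0:ℝ) < ((q*N + c + 1 : ℕ):ℝ) := by
    have : 0 < q*N + c + 1 := by omega
    exact_mod_cast this
  have hV : ∑ m ∈ range (q*N + c + 1), (G m)^2 ≤ ((q*N + c + 1 : ℕ):ℝ) * ((H:ℝ)/2) := by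
    rw [div_le_iff₀ hMpos] at hVdiv
    linarith [hVdiv]
  have hQb : ((q*N + c + 1 : ℕ):ℝ) ≤ 2*q*N := by
    push_cast
    have h1 : (c:ℝ) + 1 ≤ N := by exact_mod_cast hNc
    have h2 : (N:ℝ) ≤ q*N := by nlinarith
    nlinarith
  -- |U N| bound
  have hU2 : (U N)^2 ≤ (N:ℝ)^2 * ((q:ℝ)*H) := by
    calc (U N)^2 ≤ (N:ℝ) * ∑ m ∈ range (q*N + c + 1), (G m)^2 := B2 N
    _ ≤ (N:ℝ) * (((q*N + c + 1 : ℕ):ℝ) * ((H:ℝ)/2)) := by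
        apply mul_le_mul_of_nonneg_left hV (Nat.cast_nonneg N)
    _ ≤ (N:ℝ) * ((2*q*N) * ((H:ℝ)/2)) := by
        apply mul_le_mul_of_nonneg_left ?_ (Nat.cast_nonneg N)
        apply mul_le_mul_of_nonneg_right hQb (by positivity)
    _ = (N:ℝ)^2 * ((q:ℝ)*H) := by ring
  have hUabs : |U N| ≤ (N:ℝ) * Real.sqrt ((q:ℝ)*H) := by
    have h1 := Real.abs_le_sqrt hU2
    rwa [Real.sqrt_mul (sq_nonneg _), Real.sqrt_sq hNR.le] at h1
  -- sqrt bound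
  have hsq : Real.sqrt ((q:ℝ)*H) ≤ (ε/4) * H := by
    have h1 : (q:ℝ)*H ≤ ((ε/4)*H)^2 := by
      rw [div_le_iff₀ (by positivity : (0:ℝ) < ε^2)] at hHR
      nlinarith
    calc Real.sqrt ((q:ℝ)*H) ≤ Real.sqrt (((ε/4)*H)^2) := Real.sqrt_le_sqrt h1
    _ = (ε/4)*H := Real.sqrt_sq (by positivity)
  -- conclude
  have hHT : (H:ℝ) * |T N| ≤ |U N| + (H:ℝ)*H := by
    have h1 := B1 N
    have h2 : |(H:ℝ) * T N| ≤ |U N| + |U N - (H:ℝ)*T N| := by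
      have := abs_sub_abs_le_abs_sub ((H:ℝ)*T N) (U N)
      have h3 := abs_sub_comm (U N) ((H:ℝ)*T N)
      calc |(H:ℝ) * T N| = |U N - (U N - (H:ℝ)*T N)| := by congr 1; ring
      _ ≤ |U N| + |U N - (H:ℝ)*T N| := abs_sub _ _
    rw [abs_mul, abs_of_nonneg hHpos.le] at h2
    linarith
  have hfinal : |T N| / N ≤ ε/4 + ε/4 := by
    have hTb : |T N| ≤ (N:ℝ) * (ε/4) + H := by
      have h1 : (H:ℝ) * |T N| ≤ (N:ℝ) * Real.sqrt ((q:ℝ)*H) + (H:ℝ)*H := by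
        linarith
      have h2 : (N:ℝ) * Real.sqrt ((q:ℝ)*H) ≤ (N:ℝ) * ((ε/4)*H) :=
        mul_le_mul_of_nonneg_left hsq hNR.le
      have h3 : (H:ℝ) * |T N| ≤ (N:ℝ) * ((ε/4)*H) + (H:ℝ)*H := by linarith
      have e : (N:ℝ)*((ε/4)*H) + (H:ℝ)*H = (H:ℝ)*((N:ℝ)*(ε/4)+H) := by ring
      have h5 : (H:ℝ) * |T N| ≤ (H:ℝ) * ((N:ℝ)*(ε/4) + H) := by linarith
      exact le_of_mul_le_mul_left h5 hHpos
    rw [div_le_iff₀ hNR]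
    calc |T N| ≤ (N:ℝ) * (ε/4) + H := hTb
    _ ≤ (N:ℝ) * (ε/4) + (ε/4) * N := by
        rw [div_le_iff₀ hNR] at hHN
        linarith
    _ = (ε/4 + ε/4) * N := by ring
  rw [Real.dist_eq, sub_zero, abs_div, abs_of_nonneg hNR.le]
  exact lt_of_le_of_lt hfinal (by linarith)


lemma upperDensity_eq (V : Set ℕ) :
    upperDensity V = limsup (fun N : ℕ => cnt (· ∈ V) N / N) atTop := rfl

/-- Density 1/2 along arithmetic progressions. -/
lemma apden (A : Set ℕ)
    (hapg : ∀ q c : ℕ, 0 < q →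
      Tendsto (fun N : ℕ => (∑ i ∈ range N, g A (q*i + (c+1)))/N) atTop (nhds 0))
    (q c : ℕ) (hq : 0 < q) (p : ℕ → Prop)
    (hp : ∀ i : ℕ, p (i+1) ↔ q*i + (c+1) ∈ A) : Den p (1/2) := by
  have key : ∀ N : ℕ, cnt p N = (∑ i ∈ range N, g A (q*i + (c+1))) + (N:ℝ)/2 := by
    intro N
    rw [cnt_eq_sum]
    have e : ∀ i ∈ range N, (if p (i+1) then (1:ℝ) else 0) = g A (q*i + (c+1)) + 1/2 := by
      intro i _
      unfold g
      by_cases h : q*i + (c+1) ∈ A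
      · rw [if_pos h, if_pos ((hp i).mpr h)]
        ring
      · rw [if_neg h, if_neg (fun hh => h ((hp i).mp hh))]
        ring
    rw [Finset.sum_congr rfl e, Finset.sum_add_distrib]
    rw [Finset.sum_const, Finset.card_range, nsmul_eq_mul]
    ring
  have h2 : Tendsto (fun N : ℕ => (∑ i ∈ range N, g A (q*i + (c+1)))/N + (N:ℝ)/2/N)
      atTop (nhds (1/2)) := by
    have hone : Tendsto (fun N : ℕ => (N:ℝ)/2/N) atTop (nhds (1/2)) := by
      apply Tendsto.congr' ?_ tendsto_const_nhds
      filter_upwards [eventually_ge_atTop 1] with N hN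
      have hN' : (N:ℝ) ≠ 0 := by
        have : (0:ℝ) < N := by exact_mod_cast hN
        exact this.ne'
      field_simp
    have := (hapg q c hq).add hone
    rwa [zero_add] at this
  apply Tendsto.congr ?_ h2
  intro N
  rw [key N, add_div]

lemma nul_of_nonpos (V : Set ℕ) (h : upperDensity V ≤ 0) : Den (· ∈ V) 0 := by
  unfold Den
  have hub : IsBoundedUnder (· ≤ ·) atTop (fun N : ℕ => cnt (· ∈ V) N / N) := by
    refine ⟨1, ?_⟩
    rw [eventually_map]
    apply Eventually.of_forall
    intro N
    rcases Nat.eq_zero_or_pos N with rfl | hN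
    · simp
    · have hN' : (0:ℝ) < N := by exact_mod_cast hN
      rw [div_le_one hN']
      exact cnt_le _ N
  have hlb : IsBoundedUnder (· ≥ ·) atTop (fun N : ℕ => cnt (· ∈ V) N / N) := by
    refine ⟨0, ?_⟩
    rw [eventually_map]
    exact Eventually.of_forall fun N => div_nonneg (cnt_nonneg _ N) (Nat.cast_nonneg N)
  apply tendsto_of_le_liminf_of_limsup_le
  · apply le_liminf_of_le hub.isCoboundedUnder_flip
    exact Eventually.of_forall fun N => div_nonneg (cnt_nonneg _ N) (Nat.cast_nonneg N)
  · rw [← upperDensity_eq]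
    exact h
  · exact hub
  · exact hlb

lemma exists_ge_of_pos (V : Set ℕ) (h : 0 < upperDensity V) (N : ℕ) :
    ∃ b, N ≤ b ∧ b ∈ V := by
  by_contra hc
  push_neg at hc
  have hbound : ∀ M, cnt (· ∈ V) M ≤ N := by
    intro M
    unfold cnt
    have hsub : (Icc 1 M).filter (· ∈ V) ⊆ Icc 1 N := by
      intro x hx
      rw [Finset.mem_filter, Finset.mem_Icc] at hx
      rw [Finset.mem_Icc]
      refine ⟨hx.1.1, ?_⟩
      by_contra hgt
      push_neg at hgt
      exact hc x (by omega) hx.2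
    have := Finset.card_le_card hsub
    have hN : (Icc 1 N).card = N := by rw [Nat.card_Icc]; omega
    rw [hN] at this
    exact_mod_cast this
  have htend : Tendsto (fun M : ℕ => cnt (· ∈ V) M / M) atTop (nhds 0) := by
    apply squeeze_zero (fun M => div_nonneg (cnt_nonneg _ M) (Nat.cast_nonneg M))
      (fun M => ?_) (tendsto_const_div_atTop_nhds_zero_nat (N:ℝ))
    rcases Nat.eq_zero_or_pos M with rfl | hM
    · simp
    · have hM' : (0:ℝ) < M := by exact_mod_cast hM
      gcongr
      exact hbound M
  have := htend.limsup_eq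
  rw [← upperDensity_eq] at this
  rw [this] at h
  exact lt_irrefl 0 h

lemma den_unique {p : ℕ → Prop} {d e : ℝ} (hd : Den p d) (he : Den p e) : d = e :=
  tendsto_nhds_unique hd he


end PSP

/-- For a classical normal set `A ⊆ ℕ` and `S_a = {b : a + b ∈ A ∧ a·b ∈ A}`:
for every `a ≥ 1`, at least one of `S_a`, `S_{a²}` has positive upper density;
in particular `A` contains pairs `{a+b, a·b}` with arbitrarily large `a` and `b`. -/
theorem pairs_sum_product
    (A : Set ℕ) (hA : ClassicalNormalSet A) :
    (∀ a : ℕ, 0 < a →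
      0 < upperDensity {b : ℕ | a + b ∈ A ∧ a * b ∈ A} ∨
      0 < upperDensity {b : ℕ | a ^ 2 + b ∈ A ∧ a ^ 2 * b ∈ A}) ∧
    (∀ N : ℕ, ∃ a b : ℕ, N ≤ a ∧ N ≤ b ∧ a + b ∈ A ∧ a * b ∈ A) := by
  classical
  open PSP in
  have key : ∀ a : ℕ, 0 < a →
      0 < upperDensity {b : ℕ | a + b ∈ A ∧ a * b ∈ A} ∨
      0 < upperDensity {b : ℕ | a ^ 2 + b ∈ A ∧ a ^ 2 * b ∈ A} := by
    intro a ha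
    by_contra hcon
    push_neg at hcon
    obtain ⟨h₁, h₂⟩ := hcon
    -- the AP-density machinery
    have hcorr : ∀ k₁ k₂ : ℕ, 0 < k₁ → 0 < k₂ → k₁ ≠ k₂ →
        Tendsto (fun M : ℕ => (∑ m ∈ Finset.range M,
          PSP.g A (k₁ + (m+1)) * PSP.g A (k₂ + (m+1))) / M) atTop (nhds 0) :=
      fun k₁ k₂ p1 p2 hne => corr_pair hA p1 p2 hne
    have hSM := fun q H hq => second_moment A hcorr q H hq
    have hapg : ∀ q c : ℕ, 0 < q →
        Tendsto (fun N : ℕ => (∑ i ∈ Finset.range N, PSP.g A (q*i + (c+1)))/N) atTop (nhds 0) :=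
      fun q c hq => apg A hSM q c hq
    have hapd : ∀ (q c : ℕ), 0 < q → ∀ (p : ℕ → Prop),
        (∀ i : ℕ, p (i+1) ↔ q*i + (c+1) ∈ A) → Den p (1/2) :=
      fun q c hq p hp => apden A hapg q c hq p hp
    -- null sets from the assumption
    have n₁ : Den (fun n => a + n ∈ A ∧ a*n ∈ A) 0 :=
      den_congr (fun n => Iff.rfl) (nul_of_nonpos _ h₁)
    have n₃ : Den (fun n => a^2 + n ∈ A ∧ a^2*n ∈ A) 0 :=
      den_congr (fun n => Iff.rfl) (nul_of_nonpos _ h₂)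
    have n₂ : Den (fun n => a*n + a ∈ A ∧ a^2*n ∈ A) 0 := by
      have h := nul_mul a ha n₁
      apply den_congr ?_ h
      intro n
      rw [show a + a*n = a*n + a from by ring, show a*(a*n) = a^2*n from by ring]
    -- density 1/2 facts
    have d₁ : Den (fun n => a + n ∈ A) (1/2) := den_single hA ha
    have d₅ : Den (fun n => a^2 + n ∈ A) (1/2) := den_single hA (pow_pos ha 2)
    have d₂ : Den (fun n => a*n ∈ A) (1/2) := by
      apply hapd a (a-1) ha
      intro i
      rw [show a - 1 + 1 = a from by omega,
        show a*(i+1) = a*i + a from by ring]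
    have d₃ : Den (fun n => a*n + a ∈ A) (1/2) := by
      apply hapd a (2*a-1) ha
      intro i
      rw [show 2*a - 1 + 1 = 2*a from by omega,
        show a*(i+1) + a = a*i + 2*a from by ring]
    have d₄ : Den (fun n => a^2*n ∈ A) (1/2) := by
      apply hapd (a^2) (a^2-1) (pow_pos ha 2)
      intro i
      rw [show a^2 - 1 + 1 = a^2 from Nat.succ_pred_eq_of_pos (n := a^2) (pow_pos ha 2),
        show a^2*(i+1) = a^2*i + a^2 from by ring]
    -- a.e. complements
    have e₁ : Den (fun n => ¬(a + n ∈ A) ∧ ¬(a*n ∈ A)) 0 := aec d₁ d₂ n₁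
    have e₂ : Den (fun n => ¬(a*n + a ∈ A) ∧ ¬(a^2*n ∈ A)) 0 := aec d₃ d₄ n₂
    have e₃ : Den (fun n => ¬(a^2 + n ∈ A) ∧ ¬(a^2*n ∈ A)) 0 := aec d₅ d₄ n₃
    -- shifted versions of n₁, e₁
    have s₁ : Den (fun n => (a+1) + n ∈ A ∧ a*n + a ∈ A) 0 := by
      apply den_congr ?_ (nul_shift n₁)
      intro n
      rw [show a + (n+1) = (a+1) + n from by ring, show a*(n+1) = a*n + a from by ring]
    -- combine: (a*n+a ∈ A) ≈ ¬(a^2*n ∈ A) ≈ (a^2+n ∈ A)ᶜᶜ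
    have f₂ : Den (fun n => ¬(a*n + a ∈ A) ∧ (a^2 + n ∈ A)) 0 := by
      apply nul_mono ?_ (nul_or e₂ n₃)
      intro n hn
      by_cases hq : a^2*n ∈ A
      · exact Or.inr ⟨hn.2, hq⟩
      · exact Or.inl ⟨hn.1, hq⟩
    have g₁ : Den (fun n => (a+1) + n ∈ A ∧ a^2 + n ∈ A) 0 := by
      apply nul_mono ?_ (nul_or s₁ f₂)
      intro n hn
      by_cases hp : a*n + a ∈ A
      · exact Or.inl ⟨hn.1, hp⟩
      · exact Or.inr ⟨hp, hn.2⟩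
    -- but this set has density 1/4 by normality
    have hne : a + 1 ≠ a^2 := by
      intro heq
      rcases Nat.lt_or_ge a 2 with h | h
      · interval_cases a
        · norm_num at heq
      · have h2 : 2*a ≤ a*a := Nat.mul_le_mul_right a h
        rw [pow_two] at heq
        omega
    have dd : Den (fun n => (a+1) + n ∈ A ∧ a^2 + n ∈ A) (1/4) := by
      have h := den_pair hA (Nat.succ_pos a) (pow_pos ha 2) hne true true
      apply den_congr ?_ h
      intro n
      simp
    have := den_unique dd g₁
    norm_num at this
  refine ⟨key, ?_⟩
  intro N
  set a := max 1 N with hadef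
  have ha : 0 < a := lt_of_lt_of_le Nat.one_pos (le_max_left 1 N)
  have haN : N ≤ a := le_max_right 1 N
  rcases key a ha with h | h
  · obtain ⟨b, hbN, hbV⟩ := PSP.exists_ge_of_pos _ h N
    rw [Set.mem_setOf_eq] at hbV
    exact ⟨a, b, haN, hbN, hbV.1, hbV.2⟩
  · obtain ⟨b, hbN, hbV⟩ := PSP.exists_ge_of_pos _ h N
    rw [Set.mem_setOf_eq] at hbV
    refine ⟨a^2, b, ?_, hbN, hbV.1, hbV.2⟩
    calc N ≤ a := haN
    _ ≤ a^2 := by nlinarith
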